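/- Let ν ≥ 2 be an integer and α ∈ ℝ^ν. For every complex number s with Re(s) > 0, the Möbius inversion identity Σ_{m=1}^∞ μ(m) · Σ_{n ∈ ℤ^ν \ {0}} Σ_{ℓ=1}^∞ (1/ℓ) e^{2πi ℓ m (n·α)} e^{-m s ℓ |n|} = Σ_{p ∈ ℤ^ν, gcd(p)=1} Σ_{ℓ=1}^∞ (1/ℓ) e^{2πi ℓ (p·α)} e^{-s ℓ |p|} holds, i.e. log L_{√+²}(s,α) = Σ_{m=1}^∞ μ(m) log G(ms, mα), where all series converge absolutely. -/

import Mathlib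

open scoped BigOperators

noncomputable section

namespace Stmt2Proof


variable {ν : ℕ} (α : Fin ν → ℝ) (s : ℂ)

def nrm (n : Fin ν → ℤ) : ℝ := Real.sqrt (∑ i, ((n i : ℝ)) ^ 2)

def dot (n : Fin ν → ℤ) : ℝ := ∑ i, (n i : ℝ) * α i

def f (k : ℕ) (n : Fin ν → ℤ) : ℂ :=
  Complex.exp (((2 * Real.pi * k * dot α n : ℝ) : ℂ) * Complex.I) *
  Complex.exp (-s * k * ((nrm n : ℝ) : ℂ))

lemma norm_f (k : ℕ) (n : Fin ν → ℤ) : ‖f α s k n‖ = Real.exp (-(s.re * k * nrm n)) := by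
  rw [f, norm_mul, Complex.norm_exp_ofReal_mul_I,
    one_mul, Complex.norm_exp]
  congr 1
  simp [Complex.mul_re]

lemma nrm_nonneg (n : Fin ν → ℤ) : 0 ≤ nrm n := Real.sqrt_nonneg _

lemma one_le_nrm {n : Fin ν → ℤ} (hn : n ≠ 0) : 1 ≤ nrm n := by
  obtain ⟨i, hi⟩ : ∃ i, n i ≠ 0 := by
    by_contra h
    push_neg at h
    exact hn (funext h)
  have h1 : (1 : ℝ) ≤ ((n i : ℝ)) ^ 2 := by
    have : (1 : ℤ) ≤ (n i) ^ 2 := by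
      rcases lt_or_gt_of_ne hi with h | h <;> nlinarith
    exact_mod_cast this
  have h2 : ((n i : ℝ)) ^ 2 ≤ ∑ j, ((n j : ℝ)) ^ 2 :=
    Finset.single_le_sum (f := fun j => ((n j : ℝ)) ^ 2) (fun j _ => sq_nonneg _)
      (Finset.mem_univ i)
  exact Real.one_le_sqrt.mpr (le_trans h1 h2)

lemma nrm_smul (d : ℕ) (p : Fin ν → ℤ) :
    nrm (fun i => (d : ℤ) * p i) = d * nrm p := by
  rw [nrm, nrm]
  have : ∑ i, (((d : ℤ) * p i : ℤ) : ℝ) ^ 2 = (d : ℝ) ^ 2 * ∑ i, ((p i : ℝ)) ^ 2 := by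
    rw [Finset.mul_sum]
    congr 1; funext i; push_cast; ring
  rw [this, Real.sqrt_mul (sq_nonneg _), Real.sqrt_sq (by positivity)]

lemma dot_smul (d : ℕ) (p : Fin ν → ℤ) :
    dot α (fun i => (d : ℤ) * p i) = d * dot α p := by
  rw [dot, dot, Finset.mul_sum]
  congr 1; funext i; push_cast; ring

lemma f_smul (k d : ℕ) (p : Fin ν → ℤ) :
    f α s k (fun i => (d : ℤ) * p i) = f α s (k * d) p := by
  rw [f, f, nrm_smul, dot_smul]
  congr 2
  · push_cast; ring
  · push_cast; ring

lemma summable_exp_int {b : ℝ} (hb : 0 < b) :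
    Summable fun z : ℤ => Real.exp (-b * |(z : ℝ)|) := by
  have hgeom : Summable fun n : ℕ => Real.exp (-b) ^ n :=
    summable_geometric_of_lt_one (Real.exp_pos _).le
      (Real.exp_lt_one_iff.mpr (by linarith))
  apply Summable.of_nat_of_neg
  · refine hgeom.congr fun n => ?_
    rw [← Real.exp_nat_mul]
    congr 1
    simp [abs_of_nonneg, mul_comm]
  · refine hgeom.congr fun n => ?_
    rw [← Real.exp_nat_mul]
    congr 1
    push_cast
    rw [abs_neg, abs_of_nonneg (by positivity)]
    ring

lemma summable_pi_exp {ν : ℕ} {b : ℝ} (hb : 0 < b) :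
    Summable fun n : Fin ν → ℤ => ∏ i, Real.exp (-b * |(n i : ℝ)|) := by
  induction ν with
  | zero => exact Summable.of_finite
  | succ ν ih =>
      rw [← (Fin.consEquiv (fun _ : Fin (ν + 1) => ℤ)).summable_iff]
      refine (((summable_exp_int hb).mul_of_nonneg ih (fun _ => (Real.exp_pos _).le)
        (fun _ => Finset.prod_nonneg fun _ _ => (Real.exp_pos _).le)).congr
        fun x => ?_)
      rw [Function.comp_apply, Fin.prod_univ_succ]
      simp [Fin.consEquiv]


lemma abs_le_nrm (n : Fin ν → ℤ) (i : Fin ν) : |(n i : ℝ)| ≤ nrm n := by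
  rw [nrm, ← Real.sqrt_sq_eq_abs]
  exact Real.sqrt_le_sqrt (Finset.single_le_sum (f := fun j => ((n j : ℝ)) ^ 2)
    (fun j _ => sq_nonneg _) (Finset.mem_univ i))

lemma sum_abs_le (n : Fin ν → ℤ) : ∑ i, |(n i : ℝ)| ≤ ν * nrm n := by
  calc ∑ i, |(n i : ℝ)| ≤ ∑ _i : Fin ν, nrm n :=
        Finset.sum_le_sum fun i _ => abs_le_nrm n i
    _ = ν * nrm n := by simp [Finset.sum_const, nsmul_eq_mul]

lemma summable_exp_nrm (hν : 0 < ν) {b : ℝ} (hb : 0 < b) :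
    Summable fun n : Fin ν → ℤ => Real.exp (-b * nrm n) := by
  have hb' : 0 < b / ν := by positivity
  refine Summable.of_nonneg_of_le (fun _ => (Real.exp_pos _).le) (fun n => ?_)
    (summable_pi_exp hb')
  rw [← Real.exp_sum]
  apply Real.exp_le_exp.2
  have h1 : ∑ i, -(b / ν) * |(n i : ℝ)| = -(b / ν) * ∑ i, |(n i : ℝ)| := by
    rw [Finset.mul_sum]
  rw [h1]
  have h2 := sum_abs_le n
  have hν' : (0:ℝ) < ν := by exact_mod_cast hν
  rw [neg_mul, neg_mul, neg_le_neg_iff, div_mul_eq_mul_div, div_le_iff₀ hν']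
  calc b * ∑ i, |(n i : ℝ)| ≤ b * (ν * nrm n) := by
        exact mul_le_mul_of_nonneg_left h2 hb.le
    _ = b * nrm n * ν := by ring


abbrev Prim (ν : ℕ) := {p : Fin ν → ℤ // (Finset.univ.gcd fun i => (p i).natAbs) = 1}

lemma gcd_smul (d : ℕ) (p : Fin ν → ℤ) :
    (Finset.univ.gcd fun i => ((d : ℤ) * p i).natAbs) =
      d * Finset.univ.gcd fun i => (p i).natAbs := by
  have h : (fun i : Fin ν => ((d : ℤ) * p i).natAbs) =
      fun i => d * (p i).natAbs := by
    funext i; rw [Int.natAbs_mul, Int.natAbs_natCast]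
  rw [h, Finset.gcd_mul_left, normalize_eq]

def Dn (n : Fin ν → ℤ) : ℕ := Finset.univ.gcd fun i => (n i).natAbs

lemma Dn_ne_zero {n : Fin ν → ℤ} (hn : n ≠ 0) : Dn n ≠ 0 := by
  intro h
  apply hn
  funext i
  have := (Finset.gcd_eq_zero_iff.mp h) i (Finset.mem_univ i)
  simpa [Int.natAbs_eq_zero] using this

lemma Dn_dvd (n : Fin ν → ℤ) (i : Fin ν) : ((Dn n : ℕ) : ℤ) ∣ n i :=
  (Int.natCast_dvd_natCast.mpr (Finset.gcd_dvd (Finset.mem_univ i))).trans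
    (Int.natAbs_dvd.mpr dvd_rfl)

lemma prim_div {n : Fin ν → ℤ} (hn : n ≠ 0) :
    (Finset.univ.gcd fun i => (n i / (Dn n : ℤ)).natAbs) = 1 := by
  have key : Dn n * 1 = Dn n * Finset.univ.gcd fun i => (n i / (Dn n : ℤ)).natAbs := by
    rw [mul_one]
    conv_lhs => rw [Dn]
    rw [← gcd_smul]
    congr 1
    funext i
    rw [Int.mul_ediv_cancel' (Dn_dvd n i)]
  exact (mul_left_cancel₀ (Dn_ne_zero hn) key).symm

lemma prim_ne_zero (p : Prim ν) : p.1 ≠ 0 := by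
  intro h
  have := p.2
  rw [show (fun i => (p.1 i).natAbs) = fun _ => 0 by funext i; rw [h]; rfl] at this
  rw [Finset.gcd_eq_zero_iff.mpr fun x _ => rfl] at this
  exact one_ne_zero this.symm

def e1 : (ℕ+ × Prim ν) ≃ {n : Fin ν → ℤ // n ≠ 0} where
  toFun x := ⟨fun i => ((x.1 : ℕ) : ℤ) * x.2.1 i, by
    intro h
    apply prim_ne_zero x.2
    funext i
    have := congrFun h i
    simp only [Pi.zero_apply, mul_eq_zero] at this ⊢
    rcases this with h' | h'
    · exact absurd h' (by exact_mod_cast x.1.ne_zero)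
    · exact h'⟩
  invFun n := (⟨Dn n.1, Nat.pos_of_ne_zero (Dn_ne_zero n.2)⟩,
    ⟨fun i => n.1 i / (Dn n.1 : ℤ), prim_div n.2⟩)
  left_inv := by
    rintro ⟨d, p⟩
    have hgcd : Dn (fun i => ((d : ℕ) : ℤ) * p.1 i) = (d : ℕ) := by
      rw [Dn, gcd_smul, p.2, mul_one]
    refine Prod.ext (Subtype.ext ?_) (Subtype.ext ?_)
    · exact hgcd
    · funext i
      simp only [hgcd]
      exact Int.mul_ediv_cancel_left _ (by exact_mod_cast d.ne_zero)
  right_inv := by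
    rintro ⟨n, hn⟩
    refine Subtype.ext ?_
    funext i
    exact Int.mul_ediv_cancel' (Dn_dvd n i)

lemma sum_moebius_antidiagonal (k : ℕ) :
    (∑ x ∈ Nat.divisorsAntidiagonal k, ((ArithmeticFunction.moebius x.1 : ℤ) : ℂ)) =
      if k = 1 then 1 else 0 := by
  have h := congrArg (fun f : ArithmeticFunction ℤ => f k)
    ArithmeticFunction.moebius_mul_coe_zeta
  simp only [ArithmeticFunction.mul_apply, ArithmeticFunction.one_apply] at h
  have h2 : (∑ x ∈ Nat.divisorsAntidiagonal k, (ArithmeticFunction.moebius x.1 : ℤ)) =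
      if k = 1 then 1 else 0 := by
    rw [← h]
    refine Finset.sum_congr rfl fun x hx => ?_
    have hx2 : x.2 ≠ 0 := by
      rcases Nat.mem_divisorsAntidiagonal.mp hx with ⟨h1, h0⟩
      intro h'
      exact h0 (by rw [← h1, h', mul_zero])
    rw [ArithmeticFunction.natCoe_apply, ArithmeticFunction.zeta_apply_ne hx2]
    simp
  calc (∑ x ∈ Nat.divisorsAntidiagonal k, ((ArithmeticFunction.moebius x.1 : ℤ) : ℂ))
      = ((∑ x ∈ Nat.divisorsAntidiagonal k, (ArithmeticFunction.moebius x.1 : ℤ) : ℤ) : ℂ) := by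
        push_cast; rfl
    _ = _ := by rw [h2]; split <;> simp

def fiberEquiv (k : ℕ+) :
    {md : ℕ+ × ℕ+ // md.1 * md.2 = k} ≃ (Nat.divisorsAntidiagonal (k : ℕ) : Finset (ℕ × ℕ)) where
  toFun x := ⟨((x.1.1 : ℕ), (x.1.2 : ℕ)), by
    rw [Nat.mem_divisorsAntidiagonal]
    refine ⟨?_, k.ne_zero⟩
    show (x.1.1 : ℕ) * (x.1.2 : ℕ) = (k : ℕ)
    exact_mod_cast congrArg (fun t : ℕ+ => (t : ℕ)) x.2⟩
  invFun y :=
    have hy := Nat.mem_divisorsAntidiagonal.mp y.2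
    have h1 : 0 < y.1.1 := Nat.pos_of_ne_zero fun h => hy.2 (by rw [← hy.1, h, zero_mul])
    have h2 : 0 < y.1.2 := Nat.pos_of_ne_zero fun h => hy.2 (by rw [← hy.1, h, mul_zero])
    ⟨(⟨y.1.1, h1⟩, ⟨y.1.2, h2⟩), by
      apply PNat.coe_injective
      rw [PNat.mul_coe]
      exact hy.1⟩
  left_inv x := by
    apply Subtype.ext
    apply Prod.ext <;> exact rfl
  right_inv y := by
    apply Subtype.ext
    apply Prod.ext <;> exact rfl

instance (k : ℕ+) : Fintype {md : ℕ+ × ℕ+ // md.1 * md.2 = k} :=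
  Fintype.ofEquiv _ (fiberEquiv k).symm

lemma moebius_tsum (g : ℕ+ → ℂ)
    (hg : Summable fun md : ℕ+ × ℕ+ =>
      ((ArithmeticFunction.moebius ((md.1 : ℕ)) : ℤ) : ℂ) * g (md.1 * md.2)) :
    (∑' md : ℕ+ × ℕ+, ((ArithmeticFunction.moebius ((md.1 : ℕ)) : ℤ) : ℂ) * g (md.1 * md.2))
      = g 1 := by
  set F : ℕ+ × ℕ+ → ℂ :=
    fun md => ((ArithmeticFunction.moebius ((md.1 : ℕ)) : ℤ) : ℂ) * g (md.1 * md.2) with hF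
  set e : (Σ k : ℕ+, {md : ℕ+ × ℕ+ // md.1 * md.2 = k}) ≃ ℕ+ × ℕ+ :=
    Equiv.sigmaFiberEquiv (fun md : ℕ+ × ℕ+ => md.1 * md.2) with he
  have h1 : (∑' md : ℕ+ × ℕ+, F md) = ∑' z : Σ k : ℕ+, {md : ℕ+ × ℕ+ // md.1 * md.2 = k},
      F (e z) := (e.tsum_eq F).symm
  rw [h1, Summable.tsum_sigma' (f := fun z : (Σ k : ℕ+, {md : ℕ+ × ℕ+ // md.1 * md.2 = k}) => F (e z))
    (fun k => Summable.of_finite) ((e.summable_iff).mpr hg)]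
  have h2 : ∀ k : ℕ+, (∑' c : {md : ℕ+ × ℕ+ // md.1 * md.2 = k}, F (e ⟨k, c⟩)) =
      (if (k : ℕ) = 1 then (1 : ℂ) else 0) * g k := by
    intro k
    have h4 : ∀ c : {md : ℕ+ × ℕ+ // md.1 * md.2 = k},
        F (e ⟨k, c⟩) = ((ArithmeticFunction.moebius ((c.1.1 : ℕ)) : ℤ) : ℂ) * g k := by
      rintro ⟨md, hc⟩
      have : e ⟨k, ⟨md, hc⟩⟩ = md := rfl
      rw [this, hF]
      simp only
      rw [hc]
    rw [tsum_fintype, Finset.sum_congr rfl (fun c _ => h4 c),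
      ← Equiv.sum_comp (fiberEquiv k).symm
        (fun c : {md : ℕ+ × ℕ+ // md.1 * md.2 = k} =>
          ((ArithmeticFunction.moebius ((c.1.1 : ℕ)) : ℤ) : ℂ) * g k)]
    have h5 : ∀ y : (Nat.divisorsAntidiagonal (k : ℕ) : Finset (ℕ × ℕ)),
        ((ArithmeticFunction.moebius (((((fiberEquiv k).symm y).1.1 : ℕ+) : ℕ)) : ℤ) : ℂ) * g k
          = ((ArithmeticFunction.moebius (y.1.1) : ℤ) : ℂ) * g k := by
      rintro ⟨⟨a, b⟩, hy⟩
      rfl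
    rw [Finset.sum_congr rfl (fun y _ => h5 y)]
    rw [Finset.sum_coe_sort (Nat.divisorsAntidiagonal (k : ℕ))
      (fun x => ((ArithmeticFunction.moebius (x.1) : ℤ) : ℂ) * g k)]
    rw [← Finset.sum_mul, sum_moebius_antidiagonal]
  rw [tsum_congr h2]
  rw [tsum_eq_single 1 (fun k hk => by
    rw [if_neg (fun h => hk (PNat.coe_injective (by simpa using h))), zero_mul])]
  norm_num

lemma norm_moebius_le_one (k : ℕ) : ‖((ArithmeticFunction.moebius k : ℤ) : ℂ)‖ ≤ 1 := by
  by_cases h : Squarefree k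
  · rw [ArithmeticFunction.moebius_apply_of_squarefree h]
    push_cast
    rw [norm_pow, norm_neg, norm_one, one_pow]
  · rw [ArithmeticFunction.moebius_eq_zero_of_not_squarefree h]
    simp

lemma exp_bound2 {b x y : ℝ} (hb : 0 < b) (hx : 1 ≤ x) (hy : 1 ≤ y) :
    Real.exp (-b * (x * y)) ≤ Real.exp (-(b / 2) * x) * Real.exp (-(b / 2) * y) := by
  rw [← Real.exp_add]
  apply Real.exp_le_exp.2
  nlinarith [mul_le_mul_of_nonneg_left (by nlinarith : x ≤ x * y) (by positivity : (0:ℝ) ≤ b / 2),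
    mul_le_mul_of_nonneg_left (by nlinarith : y ≤ x * y) (by positivity : (0:ℝ) ≤ b / 2)]

lemma le_mul_right {x t : ℝ} (hx : 1 ≤ x) (ht : 1 ≤ t) : x ≤ x * t := by
  nlinarith

lemma exp_bound3 {b x y z : ℝ} (hb : 0 < b) (hx : 1 ≤ x) (hy : 1 ≤ y) (hz : 1 ≤ z) :
    Real.exp (-b * (x * y * z)) ≤
      Real.exp (-(b / 3) * x) * (Real.exp (-(b / 3) * y) * Real.exp (-(b / 3) * z)) := by
  rw [← Real.exp_add, ← Real.exp_add]
  apply Real.exp_le_exp.2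
  have hyz : (1:ℝ) ≤ y * z := by nlinarith
  have h1 : x ≤ x * y * z := by
    have := le_mul_right hx hyz; nlinarith
  have h2 : y ≤ x * y * z := by
    have : y ≤ y * (x * z) := le_mul_right hy (by nlinarith); nlinarith
  have h3 : z ≤ x * y * z := by
    have : z ≤ z * (x * y) := le_mul_right hz (by nlinarith); nlinarith
  nlinarith [mul_le_mul_of_nonneg_left h1 (by positivity : (0:ℝ) ≤ b / 3),
    mul_le_mul_of_nonneg_left h2 (by positivity : (0:ℝ) ≤ b / 3),
    mul_le_mul_of_nonneg_left h3 (by positivity : (0:ℝ) ≤ b / 3)]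

lemma exp_bound4 {b x y z w : ℝ} (hb : 0 < b) (hx : 1 ≤ x) (hy : 1 ≤ y) (hz : 1 ≤ z)
    (hw : 1 ≤ w) :
    Real.exp (-b * (x * y * z * w)) ≤
      (Real.exp (-(b / 4) * x) * Real.exp (-(b / 4) * y)) *
        (Real.exp (-(b / 4) * z) * Real.exp (-(b / 4) * w)) := by
  rw [← Real.exp_add, ← Real.exp_add, ← Real.exp_add]
  apply Real.exp_le_exp.2
  have h1 : x ≤ x * y * z * w := by
    have := le_mul_right hx (by nlinarith [le_mul_right hy (by nlinarith [le_mul_right hz hw] : (1:ℝ) ≤ z * w)] : (1:ℝ) ≤ y * (z * w)); nlinarith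
  have h2 : y ≤ x * y * z * w := by
    have := le_mul_right hy (by nlinarith [le_mul_right hx (by nlinarith [le_mul_right hz hw] : (1:ℝ) ≤ z * w)] : (1:ℝ) ≤ x * (z * w)); nlinarith
  have h3 : z ≤ x * y * z * w := by
    have := le_mul_right hz (by nlinarith [le_mul_right hx (by nlinarith [le_mul_right hy hw] : (1:ℝ) ≤ y * w)] : (1:ℝ) ≤ x * (y * w)); nlinarith
  have h4 : w ≤ x * y * z * w := by
    have := le_mul_right hw (by nlinarith [le_mul_right hx (by nlinarith [le_mul_right hy hz] : (1:ℝ) ≤ y * z)] : (1:ℝ) ≤ x * (y * z)); nlinarith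
  nlinarith [mul_le_mul_of_nonneg_left h1 (by positivity : (0:ℝ) ≤ b / 4),
    mul_le_mul_of_nonneg_left h2 (by positivity : (0:ℝ) ≤ b / 4),
    mul_le_mul_of_nonneg_left h3 (by positivity : (0:ℝ) ≤ b / 4),
    mul_le_mul_of_nonneg_left h4 (by positivity : (0:ℝ) ≤ b / 4)]

lemma summable_exp_pnat {b : ℝ} (hb : 0 < b) :
    Summable fun m : ℕ+ => Real.exp (-b * ((m : ℕ) : ℝ)) := by
  have hnat : Summable fun n : ℕ => Real.exp (-b * (n : ℝ)) := by
    have hgeom : Summable fun n : ℕ => Real.exp (-b) ^ n :=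
      summable_geometric_of_lt_one (Real.exp_pos _).le
        (Real.exp_lt_one_iff.mpr (by linarith))
    refine hgeom.congr fun n => ?_
    rw [← Real.exp_nat_mul, mul_comm]
  exact hnat.comp_injective PNat.coe_injective

lemma one_le_pnat_cast (m : ℕ+) : (1 : ℝ) ≤ ((m : ℕ) : ℝ) := by
  exact_mod_cast m.one_le

lemma norm_inv_pnat_le (ℓ : ℕ+) : ‖(((ℓ : ℕ) : ℂ))⁻¹‖ ≤ 1 := by
  rw [norm_inv, Complex.norm_natCast]
  exact inv_le_one_of_one_le₀ (by exact_mod_cast ℓ.one_le)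

/-- The basic summand with the `1/ℓ` factor. -/
def T (m : ℕ+) (n : Fin ν → ℤ) (ℓ : ℕ+) : ℂ :=
  (((ℓ : ℕ) : ℂ))⁻¹ * f α s ((m : ℕ) * (ℓ : ℕ)) n

lemma T_norm_le {n : Fin ν → ℤ} (m ℓ : ℕ+) :
    ‖T α s m n ℓ‖ ≤ Real.exp (-s.re * (((m : ℕ) : ℝ) * nrm n * ((ℓ : ℕ) : ℝ))) := by
  rw [T, norm_mul, norm_f]
  have h : (-(s.re * (((m : ℕ) * (ℓ : ℕ) : ℕ) : ℝ) * nrm n)) =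
      -s.re * (((m : ℕ) : ℝ) * nrm n * ((ℓ : ℕ) : ℝ)) := by push_cast; ring
  rw [h]
  calc ‖(((ℓ : ℕ) : ℂ))⁻¹‖ * Real.exp (-s.re * (((m : ℕ) : ℝ) * nrm n * ((ℓ : ℕ) : ℝ)))
      ≤ 1 * Real.exp (-s.re * (((m : ℕ) : ℝ) * nrm n * ((ℓ : ℕ) : ℝ))) := by
        gcongr
        exact norm_inv_pnat_le ℓ
    _ = _ := one_mul _

lemma summable_H3 (hν : 0 < ν) {c : ℝ} (hc : 0 < c) :
    Summable fun y : ℕ+ × ({n : Fin ν → ℤ // n ≠ 0} × ℕ+) =>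
      Real.exp (-c * (((y.1 : ℕ) : ℝ) * nrm y.2.1.1 * ((y.2.2 : ℕ) : ℝ))) := by
  have hc3 : 0 < c / 3 := by positivity
  have hinner : Summable fun x : {n : Fin ν → ℤ // n ≠ 0} × ℕ+ =>
      Real.exp (-(c/3) * nrm x.1.1) * Real.exp (-(c/3) * ((x.2 : ℕ) : ℝ)) :=
    ((summable_exp_nrm hν hc3).comp_injective Subtype.val_injective).mul_of_nonneg
      (summable_exp_pnat hc3) (fun _ => (Real.exp_pos _).le) (fun _ => (Real.exp_pos _).le)
  have hall := (summable_exp_pnat hc3).mul_of_nonneg hinner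
    (fun _ => (Real.exp_pos _).le) (fun _ => mul_nonneg (Real.exp_pos _).le (Real.exp_pos _).le)
  refine Summable.of_nonneg_of_le (fun _ => (Real.exp_pos _).le) (fun y => ?_) hall
  exact exp_bound3 hc (one_le_pnat_cast y.1) (one_le_nrm y.2.1.2) (one_le_pnat_cast y.2.2)

set_option maxHeartbeats 1000000 in
lemma summable_H4 (hν : 0 < ν) {c : ℝ} (hc : 0 < c) :
    Summable fun w : (Prim ν × ℕ+) × (ℕ+ × ℕ+) =>
      Real.exp (-c * (nrm w.1.1.1 * ((w.1.2 : ℕ) : ℝ) * ((w.2.1 : ℕ) : ℝ) *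
        ((w.2.2 : ℕ) : ℝ))) := by
  have hc4 : 0 < c / 4 := by positivity
  have h1 : Summable fun pl : Prim ν × ℕ+ =>
      Real.exp (-(c/4) * nrm pl.1.1) * Real.exp (-(c/4) * ((pl.2 : ℕ) : ℝ)) :=
    ((summable_exp_nrm hν hc4).comp_injective Subtype.val_injective).mul_of_nonneg
      (summable_exp_pnat hc4) (fun _ => (Real.exp_pos _).le) (fun _ => (Real.exp_pos _).le)
  have h2 : Summable fun md : ℕ+ × ℕ+ =>
      Real.exp (-(c/4) * ((md.1 : ℕ) : ℝ)) * Real.exp (-(c/4) * ((md.2 : ℕ) : ℝ)) :=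
    (summable_exp_pnat hc4).mul_of_nonneg (summable_exp_pnat hc4)
      (fun _ => (Real.exp_pos _).le) (fun _ => (Real.exp_pos _).le)
  have hall := h1.mul_of_nonneg h2
    (fun _ => mul_nonneg (Real.exp_pos _).le (Real.exp_pos _).le)
    (fun _ => mul_nonneg (Real.exp_pos _).le (Real.exp_pos _).le)
  refine Summable.of_nonneg_of_le (fun _ => (Real.exp_pos _).le) (fun w => ?_) hall
  exact exp_bound4 hc (one_le_nrm (prim_ne_zero w.1.1)) (one_le_pnat_cast w.1.2)
    (one_le_pnat_cast w.2.1) (one_le_pnat_cast w.2.2)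

set_option maxHeartbeats 1000000 in
lemma summable_H2 (hν : 0 < ν) {c : ℝ} (hc : 0 < c) :
    Summable fun pl : Prim ν × ℕ+ =>
      Real.exp (-c * (nrm pl.1.1 * ((pl.2 : ℕ) : ℝ))) := by
  have hc2 : 0 < c / 2 := by positivity
  have hall : Summable fun pl : Prim ν × ℕ+ =>
      Real.exp (-(c/2) * nrm pl.1.1) * Real.exp (-(c/2) * ((pl.2 : ℕ) : ℝ)) :=
    ((summable_exp_nrm hν hc2).comp_injective Subtype.val_injective).mul_of_nonneg
      (summable_exp_pnat hc2) (fun _ => (Real.exp_pos _).le) (fun _ => (Real.exp_pos _).le)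
  refine Summable.of_nonneg_of_le (fun _ => (Real.exp_pos _).le) (fun pl => ?_) hall
  exact exp_bound2 hc (one_le_nrm (prim_ne_zero pl.1)) (one_le_pnat_cast pl.2)

/-- Reindexing equivalence. -/
def e2 : ((Prim ν × ℕ+) × (ℕ+ × ℕ+)) ≃ (ℕ+ × ({n : Fin ν → ℤ // n ≠ 0} × ℕ+)) where
  toFun w := (w.2.1, (e1 (w.2.2, w.1.1), w.1.2))
  invFun y := (((e1.symm y.2.1).2, y.2.2), (y.1, (e1.symm y.2.1).1))
  left_inv := by
    rintro ⟨⟨p, ℓ⟩, ⟨m, d⟩⟩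
    simp
  right_inv := by
    rintro ⟨m, n, ℓ⟩
    simp

lemma lhs_term_eq (m : ℕ+) (n : {n : Fin ν → ℤ // n ≠ 0}) (ℓ : ℕ+) :
    (((ℓ : ℕ) : ℂ))⁻¹ *
        Complex.exp (2 * Real.pi * Complex.I * ((ℓ : ℕ) : ℂ) * ((m : ℕ) : ℂ) *
          (∑ i, ((n : Fin ν → ℤ) i : ℂ) * (α i : ℂ))) *
        Complex.exp (-((m : ℕ) : ℂ) * s * ((ℓ : ℕ) : ℂ) *
          ((Real.sqrt (∑ i, (((n : Fin ν → ℤ) i : ℝ)) ^ 2) : ℝ) : ℂ)) = T α s m n.1 ℓ := by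
  have h1 : 2 * (Real.pi : ℂ) * Complex.I * ((ℓ : ℕ) : ℂ) * ((m : ℕ) : ℂ) *
      (∑ i, ((n : Fin ν → ℤ) i : ℂ) * (α i : ℂ)) =
      ((2 * Real.pi * (((m : ℕ) * (ℓ : ℕ) : ℕ) : ℝ) * dot α n.1 : ℝ) : ℂ) * Complex.I := by
    rw [dot]; push_cast; ring
  have h2 : -((m : ℕ) : ℂ) * s * ((ℓ : ℕ) : ℂ) *
      ((Real.sqrt (∑ i, (((n : Fin ν → ℤ) i : ℝ)) ^ 2) : ℝ) : ℂ) =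
      -s * (((m : ℕ) * (ℓ : ℕ) : ℕ) : ℂ) * ((nrm n.1 : ℝ) : ℂ) := by
    rw [nrm]; push_cast; ring
  rw [T, f, ← mul_assoc, h1, h2]

lemma rhs_term_eq (p : Prim ν) (ℓ : ℕ+) :
    (((ℓ : ℕ) : ℂ))⁻¹ *
        Complex.exp (2 * Real.pi * Complex.I * ((ℓ : ℕ) : ℂ) *
          (∑ i, ((p : Fin ν → ℤ) i : ℂ) * (α i : ℂ))) *
        Complex.exp (-s * ((ℓ : ℕ) : ℂ) *
          ((Real.sqrt (∑ i, (((p : Fin ν → ℤ) i : ℝ)) ^ 2) : ℝ) : ℂ)) =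
      (((ℓ : ℕ) : ℂ))⁻¹ * f α s (ℓ : ℕ) p.1 := by
  have h1 : 2 * (Real.pi : ℂ) * Complex.I * ((ℓ : ℕ) : ℂ) *
      (∑ i, ((p : Fin ν → ℤ) i : ℂ) * (α i : ℂ)) =
      ((2 * Real.pi * ((ℓ : ℕ) : ℝ) * dot α p.1 : ℝ) : ℂ) * Complex.I := by
    rw [dot]; push_cast; ring
  have h2 : -s * ((ℓ : ℕ) : ℂ) *
      ((Real.sqrt (∑ i, (((p : Fin ν → ℤ) i : ℝ)) ^ 2) : ℝ) : ℂ) =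
      -s * ((ℓ : ℕ) : ℂ) * ((nrm p.1 : ℝ) : ℂ) := by
    rw [nrm]
  rw [f, ← mul_assoc, h1, h2]

set_option maxHeartbeats 1000000 in
theorem main (hν : 2 ≤ ν) (hs : 0 < s.re) :
    (∑' m : ℕ+, ((ArithmeticFunction.moebius ((m : ℕ)) : ℤ) : ℂ) *
        ∑' n : {n : Fin ν → ℤ // n ≠ 0}, ∑' ℓ : ℕ+,
          (((ℓ : ℕ) : ℂ))⁻¹ *
            Complex.exp (2 * Real.pi * Complex.I * ((ℓ : ℕ) : ℂ) * ((m : ℕ) : ℂ) *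
              (∑ i, ((n : Fin ν → ℤ) i : ℂ) * (α i : ℂ))) *
            Complex.exp (-((m : ℕ) : ℂ) * s * ((ℓ : ℕ) : ℂ) *
              ((Real.sqrt (∑ i, (((n : Fin ν → ℤ) i : ℝ)) ^ 2) : ℝ) : ℂ))) =
      ∑' p : Prim ν, ∑' ℓ : ℕ+,
        (((ℓ : ℕ) : ℂ))⁻¹ *
          Complex.exp (2 * Real.pi * Complex.I * ((ℓ : ℕ) : ℂ) *
            (∑ i, ((p : Fin ν → ℤ) i : ℂ) * (α i : ℂ))) *
          Complex.exp (-s * ((ℓ : ℕ) : ℂ) *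
            ((Real.sqrt (∑ i, (((p : Fin ν → ℤ) i : ℝ)) ^ 2) : ℝ) : ℂ)) := by
  have hν0 : 0 < ν := lt_of_lt_of_le two_pos hν
  have hH3 := summable_H3 (ν := ν) hν0 hs
  have hH4 := summable_H4 (ν := ν) hν0 hs
  have hH2 := summable_H2 (ν := ν) hν0 hs
  have hTm : ∀ m : ℕ+, Summable fun x : {n : Fin ν → ℤ // n ≠ 0} × ℕ+ =>
      T α s m x.1.1 x.2 := by
    intro m
    exact Summable.of_norm_bounded (hH3.prod_factor m) fun x => T_norm_le α s m x.2
  have hGsum : Summable fun y : ℕ+ × ({n : Fin ν → ℤ // n ≠ 0} × ℕ+) =>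
      ((ArithmeticFunction.moebius ((y.1 : ℕ)) : ℤ) : ℂ) * T α s y.1 y.2.1.1 y.2.2 := by
    refine Summable.of_norm_bounded hH3 fun y => ?_
    rw [norm_mul]
    calc ‖((ArithmeticFunction.moebius ((y.1 : ℕ)) : ℤ) : ℂ)‖ * ‖T α s y.1 y.2.1.1 y.2.2‖
        ≤ 1 * Real.exp (-s.re * (((y.1 : ℕ) : ℝ) * nrm y.2.1.1 * ((y.2.2 : ℕ) : ℝ))) :=
          mul_le_mul (norm_moebius_le_one _) (T_norm_le α s _ _) (norm_nonneg _) zero_le_one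
      _ = _ := one_mul _
  have hWsum : Summable fun w : (Prim ν × ℕ+) × (ℕ+ × ℕ+) =>
      ((ArithmeticFunction.moebius ((w.2.1 : ℕ)) : ℤ) : ℂ) *
        ((((w.1.2 : ℕ)) : ℂ)⁻¹ *
          f α s (((w.2.1 : ℕ) * (w.1.2 : ℕ)) * (w.2.2 : ℕ)) w.1.1.1) := by
    refine Summable.of_norm_bounded hH4 fun w => ?_
    rw [norm_mul, norm_mul, norm_f]
    have hexp : (-(s.re * ((((w.2.1 : ℕ) * (w.1.2 : ℕ)) * (w.2.2 : ℕ) : ℕ) : ℝ) *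
        nrm w.1.1.1)) = -s.re * (nrm w.1.1.1 * ((w.1.2 : ℕ) : ℝ) * ((w.2.1 : ℕ) : ℝ) *
        ((w.2.2 : ℕ) : ℝ)) := by push_cast; ring
    rw [hexp]
    calc ‖((ArithmeticFunction.moebius ((w.2.1 : ℕ)) : ℤ) : ℂ)‖ * (‖(((w.1.2 : ℕ)) : ℂ)⁻¹‖ *
          Real.exp (-s.re * (nrm w.1.1.1 * ((w.1.2 : ℕ) : ℝ) * ((w.2.1 : ℕ) : ℝ) *
            ((w.2.2 : ℕ) : ℝ))))
        ≤ 1 * (1 * Real.exp (-s.re * (nrm w.1.1.1 * ((w.1.2 : ℕ) : ℝ) * ((w.2.1 : ℕ) : ℝ) *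
            ((w.2.2 : ℕ) : ℝ)))) := by
          gcongr
          · exact norm_moebius_le_one _
          · exact norm_inv_pnat_le _
      _ = _ := by rw [one_mul, one_mul]
  have hfin : Summable fun pl : Prim ν × ℕ+ =>
      (((pl.2 : ℕ)) : ℂ)⁻¹ * f α s (pl.2 : ℕ) pl.1.1 := by
    refine Summable.of_norm_bounded hH2 fun pl => ?_
    rw [norm_mul, norm_f]
    have hexp : (-(s.re * (((pl.2 : ℕ) : ℕ) : ℝ) * nrm pl.1.1)) =
        -s.re * (nrm pl.1.1 * ((pl.2 : ℕ) : ℝ)) := by push_cast; ring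
    rw [hexp]
    calc ‖(((pl.2 : ℕ)) : ℂ)⁻¹‖ * Real.exp (-s.re * (nrm pl.1.1 * ((pl.2 : ℕ) : ℝ)))
        ≤ 1 * Real.exp (-s.re * (nrm pl.1.1 * ((pl.2 : ℕ) : ℝ))) := by
          gcongr
          exact norm_inv_pnat_le _
      _ = _ := one_mul _
  calc (∑' m : ℕ+, ((ArithmeticFunction.moebius ((m : ℕ)) : ℤ) : ℂ) *
        ∑' n : {n : Fin ν → ℤ // n ≠ 0}, ∑' ℓ : ℕ+,
          (((ℓ : ℕ) : ℂ))⁻¹ *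
            Complex.exp (2 * Real.pi * Complex.I * ((ℓ : ℕ) : ℂ) * ((m : ℕ) : ℂ) *
              (∑ i, ((n : Fin ν → ℤ) i : ℂ) * (α i : ℂ))) *
            Complex.exp (-((m : ℕ) : ℂ) * s * ((ℓ : ℕ) : ℂ) *
              ((Real.sqrt (∑ i, (((n : Fin ν → ℤ) i : ℝ)) ^ 2) : ℝ) : ℂ)))
      = ∑' m : ℕ+, ((ArithmeticFunction.moebius ((m : ℕ)) : ℤ) : ℂ) *
          ∑' n : {n : Fin ν → ℤ // n ≠ 0}, ∑' ℓ : ℕ+, T α s m n.1 ℓ := by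
        refine tsum_congr fun m => ?_
        congr 1
        exact tsum_congr fun n => tsum_congr fun ℓ => lhs_term_eq α s m n ℓ
    _ = ∑' m : ℕ+, ((ArithmeticFunction.moebius ((m : ℕ)) : ℤ) : ℂ) *
          ∑' x : {n : Fin ν → ℤ // n ≠ 0} × ℕ+, T α s m x.1.1 x.2 := by
        refine tsum_congr fun m => ?_
        congr 1
        exact (Summable.tsum_prod' (hTm m) ((hTm m).prod_factor)).symm
    _ = ∑' m : ℕ+, ∑' x : {n : Fin ν → ℤ // n ≠ 0} × ℕ+,
          ((ArithmeticFunction.moebius ((m : ℕ)) : ℤ) : ℂ) * T α s m x.1.1 x.2 :=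
        tsum_congr fun m => (tsum_mul_left).symm
    _ = ∑' y : ℕ+ × ({n : Fin ν → ℤ // n ≠ 0} × ℕ+),
          ((ArithmeticFunction.moebius ((y.1 : ℕ)) : ℤ) : ℂ) * T α s y.1 y.2.1.1 y.2.2 :=
        (Summable.tsum_prod' hGsum hGsum.prod_factor).symm
    _ = ∑' w : (Prim ν × ℕ+) × (ℕ+ × ℕ+),
          ((ArithmeticFunction.moebius ((w.2.1 : ℕ)) : ℤ) : ℂ) *
            ((((w.1.2 : ℕ)) : ℂ)⁻¹ *
              f α s (((w.2.1 : ℕ) * (w.1.2 : ℕ)) * (w.2.2 : ℕ)) w.1.1.1) := by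
        rw [← (e2 (ν := ν)).tsum_eq (fun y : ℕ+ × ({n : Fin ν → ℤ // n ≠ 0} × ℕ+) =>
          ((ArithmeticFunction.moebius ((y.1 : ℕ)) : ℤ) : ℂ) * T α s y.1 y.2.1.1 y.2.2)]
        refine tsum_congr fun w => ?_
        rcases w with ⟨⟨p, ℓ⟩, ⟨m, d⟩⟩
        show ((ArithmeticFunction.moebius ((m : ℕ)) : ℤ) : ℂ) *
            T α s m (e1 ((d : ℕ+), p)).1 ℓ = _
        have he1 : (e1 ((d : ℕ+), p)).1 = fun i => (((d : ℕ+) : ℕ) : ℤ) * p.1 i := rfl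
        rw [T, he1, f_smul]
    _ = ∑' pl : Prim ν × ℕ+, ∑' md : ℕ+ × ℕ+,
          ((ArithmeticFunction.moebius ((md.1 : ℕ)) : ℤ) : ℂ) *
            ((((pl.2 : ℕ)) : ℂ)⁻¹ *
              f α s (((md.1 : ℕ) * (pl.2 : ℕ)) * (md.2 : ℕ)) pl.1.1) :=
        Summable.tsum_prod' hWsum hWsum.prod_factor
    _ = ∑' pl : Prim ν × ℕ+, (((pl.2 : ℕ)) : ℂ)⁻¹ * f α s (pl.2 : ℕ) pl.1.1 := by
        refine tsum_congr fun pl => ?_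
        rcases pl with ⟨p, ℓ⟩
        have hterm : ∀ md : ℕ+ × ℕ+,
            ((ArithmeticFunction.moebius ((md.1 : ℕ)) : ℤ) : ℂ) *
              ((((ℓ : ℕ)) : ℂ)⁻¹ * f α s (((md.1 : ℕ) * (ℓ : ℕ)) * (md.2 : ℕ)) p.1) =
            ((ArithmeticFunction.moebius ((md.1 : ℕ)) : ℤ) : ℂ) *
              ((fun k : ℕ+ => (((ℓ : ℕ)) : ℂ)⁻¹ * f α s ((k : ℕ) * (ℓ : ℕ)) p.1)
                (md.1 * md.2)) := by
          intro md
          simp only [PNat.mul_coe]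
          have harg : ((md.1 : ℕ) * (ℓ : ℕ)) * (md.2 : ℕ) =
              ((md.1 : ℕ) * (md.2 : ℕ)) * (ℓ : ℕ) := by ring
          rw [harg]
        rw [tsum_congr hterm]
        rw [moebius_tsum (fun k : ℕ+ => (((ℓ : ℕ)) : ℂ)⁻¹ * f α s ((k : ℕ) * (ℓ : ℕ)) p.1)
          (((hWsum.prod_factor (p, ℓ))).congr fun md => hterm md)]
        simp only [PNat.one_coe, one_mul]
    _ = ∑' p : Prim ν, ∑' ℓ : ℕ+, (((ℓ : ℕ)) : ℂ)⁻¹ * f α s (ℓ : ℕ) p.1 :=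
        Summable.tsum_prod' hfin hfin.prod_factor
    _ = _ := by
        exact (tsum_congr fun p => tsum_congr fun ℓ => (rhs_term_eq α s p ℓ)).symm

end Stmt2Proof

end

/-- Möbius inversion: `log L_{√+²}(s,α) = Σ_m μ(m) log G(ms, mα)`. -/
theorem stmt_2 (ν : ℕ) (hν : 2 ≤ ν) (α : Fin ν → ℝ) (s : ℂ) (hs : 0 < s.re) :
    (∑' m : ℕ+, ((ArithmeticFunction.moebius (m : ℕ) : ℤ) : ℂ) *
        ∑' n : {n : Fin ν → ℤ // n ≠ 0}, ∑' ℓ : ℕ+,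
          (((ℓ : ℕ) : ℂ))⁻¹ *
            Complex.exp (2 * Real.pi * Complex.I * ((ℓ : ℕ) : ℂ) * ((m : ℕ) : ℂ) *
              (∑ i, ((n : Fin ν → ℤ) i : ℂ) * (α i : ℂ))) *
            Complex.exp (-((m : ℕ) : ℂ) * s * ((ℓ : ℕ) : ℂ) *
              ((Real.sqrt (∑ i, (((n : Fin ν → ℤ) i : ℝ)) ^ 2) : ℝ) : ℂ))) =
      ∑' p : {p : Fin ν → ℤ // (Finset.univ.gcd fun i => (p i).natAbs) = 1}, ∑' ℓ : ℕ+,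
        (((ℓ : ℕ) : ℂ))⁻¹ *
          Complex.exp (2 * Real.pi * Complex.I * ((ℓ : ℕ) : ℂ) *
            (∑ i, ((p : Fin ν → ℤ) i : ℂ) * (α i : ℂ))) *
          Complex.exp (-s * ((ℓ : ℕ) : ℂ) *
            ((Real.sqrt (∑ i, (((p : Fin ν → ℤ) i : ℝ)) ^ 2) : ℝ) : ℂ)) := by
  exact Stmt2Proof.main α s hν hs
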